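/- The closure KA of Y = {χ_{D(p)} : p ∈ ℚ²} in the Cantor cube {0,1}^(ℝ²) contains Y ∪ {χ_B : B ∈ ℬ} ∪ {χ_∅}; in particular, for every a ∈ ℝ², θ ∈ ℝ and i ∈ {0,1,2}, the characteristic function χ_{L_i(a,θ)} is a limit of characteristic functions of open unit disks with rational centers in the product topology of {0,1}^(ℝ²), and so is the constant zero function χ_∅. -/

import Mathlib

open TopologicalSpace

/-- The open disk of radius `1` centered at `a` in the Euclidean plane. -/
def diskD (a : ℝ × ℝ) : Set (ℝ × ℝ) :=
  {x | (x.1 - a.1) ^ 2 + (x.2 - a.2) ^ 2 < 1}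

/-- `L₀(a,θ)` : the open unit disk centered at `a` together with the open half of its
circumference running (strictly) from angle `θ` to angle `θ + π`. -/
noncomputable def L0 (a : ℝ × ℝ) (θ : ℝ) : Set (ℝ × ℝ) :=
  diskD a ∪
    {x | ∃ φ : ℝ, θ < φ ∧ φ < θ + Real.pi ∧
      x = (a.1 + Real.cos φ, a.2 + Real.sin φ)}

/-- `L₁(a,θ)` : as `L₀(a,θ)` but including the endpoint at angle `θ + π`. -/
noncomputable def L1 (a : ℝ × ℝ) (θ : ℝ) : Set (ℝ × ℝ) :=
  diskD a ∪
    {x | ∃ φ : ℝ, θ < φ ∧ φ ≤ θ + Real.pi ∧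
      x = (a.1 + Real.cos φ, a.2 + Real.sin φ)}

/-- `L₂(a,θ)` : as `L₀(a,θ)` but including the endpoint at angle `θ`. -/
noncomputable def L2 (a : ℝ × ℝ) (θ : ℝ) : Set (ℝ × ℝ) :=
  diskD a ∪
    {x | ∃ φ : ℝ, θ ≤ φ ∧ φ < θ + Real.pi ∧
      x = (a.1 + Real.cos φ, a.2 + Real.sin φ)}

/-- The family `ℬ = {L_i(a,θ) : i ∈ {0,1,2}, a ∈ ℝ², θ ∈ ℝ}`. -/
noncomputable def BB : Set (Set (ℝ × ℝ)) :=
  {B | ∃ (a : ℝ × ℝ) (θ : ℝ), B = L0 a θ ∨ B = L1 a θ ∨ B = L2 a θ}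

/-- The characteristic function of a subset of the plane, with values in the
two-point discrete space `Bool`; this is a point of the Cantor cube `{0,1}^(ℝ²)`. -/
noncomputable def chi (A : Set (ℝ × ℝ)) : (ℝ × ℝ) → Bool :=
  A.boolIndicator

/-- `Y` : the set of characteristic functions of open unit disks with rational centers,
viewed inside the Cantor cube `{0,1}^(ℝ²)` (with the product topology). -/
def YA : Set ((ℝ × ℝ) → Bool) :=
  {f | ∃ p : ℚ × ℚ, f = chi (diskD ((p.1 : ℝ), (p.2 : ℝ)))}

/-- `KA` : the closure of `Y` in the Cantor cube `{0,1}^(ℝ²)`. -/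
def KA : Set ((ℝ × ℝ) → Bool) :=
  closure YA

open Real in
private lemma angle_eq_of_cos_sin' {φ t : ℝ} (hc : Real.cos φ = Real.cos t)
    (hs : Real.sin φ = Real.sin t) : ∃ k : ℤ, φ = t + k * (2 * π) := by
  have h : Complex.exp (φ * Complex.I) = Complex.exp (t * Complex.I) := by
    rw [Complex.exp_mul_I, Complex.exp_mul_I]
    push_cast [← Complex.ofReal_cos, ← Complex.ofReal_sin, hc, hs]
    ring
  obtain ⟨n, hn⟩ := Complex.exp_eq_exp_iff_exists_int.1 h
  field_simp [Complex.ext_iff] at hn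
  refine ⟨n, ?_⟩
  have hn' : (φ : ℂ) = ((t + n * (2 * π) : ℝ) : ℂ) := by rw [hn]; push_cast; ring
  exact_mod_cast hn'

noncomputable def psiAng (a x : ℝ × ℝ) : ℝ := Complex.arg ⟨x.1 - a.1, x.2 - a.2⟩

open Real in
noncomputable def sAng (a : ℝ × ℝ) (θ : ℝ) (x : ℝ × ℝ) : ℝ :=
  2 * π * Int.fract ((psiAng a x - θ) / (2 * π))

open Real

lemma sAng_nonneg (a : ℝ × ℝ) (θ : ℝ) (x : ℝ × ℝ) : 0 ≤ sAng a θ x :=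
  mul_nonneg (by positivity) (Int.fract_nonneg _)

lemma sAng_lt (a : ℝ × ℝ) (θ : ℝ) (x : ℝ × ℝ) : sAng a θ x < 2 * π := by
  rw [sAng]
  nlinarith [Real.pi_pos, Int.fract_lt_one ((psiAng a x - θ) / (2 * π))]

lemma cos_sin_sAng (a : ℝ × ℝ) (θ : ℝ) (x : ℝ × ℝ)
    (h : (x.1 - a.1) ^ 2 + (x.2 - a.2) ^ 2 = 1) :
    Real.cos (θ + sAng a θ x) = x.1 - a.1 ∧ Real.sin (θ + sAng a θ x) = x.2 - a.2 := by
  set z : ℂ := ⟨x.1 - a.1, x.2 - a.2⟩ with hz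
  have habs : ‖z‖ = 1 := by
    have h2 : ‖z‖ ^ 2 = 1 := by
      rw [Complex.sq_norm, Complex.normSq_mk]; nlinarith
    nlinarith [norm_nonneg z]
  have hz0 : z ≠ 0 := by
    intro h0; rw [h0] at habs; simp at habs
  have hcosψ : Real.cos (psiAng a x) = x.1 - a.1 := by
    rw [psiAng, ← hz, Complex.cos_arg hz0, habs]; simp [hz]
  have hsinψ : Real.sin (psiAng a x) = x.2 - a.2 := by
    rw [psiAng, ← hz, Complex.sin_arg, habs]; simp [hz]
  set u := (psiAng a x - θ) / (2 * π) with hu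
  have h2πu : 2 * π * u = psiAng a x - θ := by rw [hu]; field_simp
  have hts : θ + sAng a θ x = psiAng a x - (⌊u⌋ : ℤ) * (2 * π) := by
    rw [sAng, ← hu, Int.fract, mul_sub, h2πu]; ring
  rw [hts, Real.cos_sub_int_mul_two_pi, Real.sin_sub_int_mul_two_pi, hcosψ, hsinψ]
  exact ⟨rfl, rfl⟩

lemma circle_of_arc {a x : ℝ × ℝ} {φ : ℝ}
    (hxe : x = (a.1 + Real.cos φ, a.2 + Real.sin φ)) :
    (x.1 - a.1) ^ 2 + (x.2 - a.2) ^ 2 = 1 := by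
  rw [hxe]
  simp only []
  nlinarith [Real.sin_sq_add_cos_sq φ]

lemma exists_k (a : ℝ × ℝ) (θ : ℝ) (x : ℝ × ℝ) (φ : ℝ)
    (hxe : x = (a.1 + Real.cos φ, a.2 + Real.sin φ)) :
    ∃ k : ℤ, φ = θ + sAng a θ x + k * (2 * π) := by
  have h := circle_of_arc hxe
  obtain ⟨hc, hs⟩ := cos_sin_sAng a θ x h
  have hx1 : x.1 = a.1 + Real.cos φ := by rw [hxe]
  have hx2 : x.2 = a.2 + Real.sin φ := by rw [hxe]
  exact angle_eq_of_cos_sin' (by linarith) (by linarith)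

lemma arc_of_s (a : ℝ × ℝ) (θ : ℝ) (x : ℝ × ℝ)
    (h : (x.1 - a.1) ^ 2 + (x.2 - a.2) ^ 2 = 1) :
    x = (a.1 + Real.cos (θ + sAng a θ x), a.2 + Real.sin (θ + sAng a θ x)) := by
  obtain ⟨hc, hs⟩ := cos_sin_sAng a θ x h
  rw [Prod.ext_iff]
  constructor <;> simp <;> linarith

lemma mem_L0_iff (a : ℝ × ℝ) (θ : ℝ) (x : ℝ × ℝ)
    (h : (x.1 - a.1) ^ 2 + (x.2 - a.2) ^ 2 = 1) :
    x ∈ L0 a θ ↔ (0 < sAng a θ x ∧ sAng a θ x < π) := by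
  have hnd : x ∉ diskD a := by simp only [diskD, Set.mem_setOf_eq]; linarith
  have hπ := Real.pi_pos
  have hs0 := sAng_nonneg a θ x
  have hs2 := sAng_lt a θ x
  constructor
  · rintro (hd | ⟨φ, h1, h2, hxe⟩)
    · exact absurd hd hnd
    · obtain ⟨k, hk⟩ := exists_k a θ x φ hxe
      have hk0 : k = 0 := by
        have hlo : (-1 : ℝ) < k := by nlinarith
        have hhi : (k : ℝ) < 1 := by nlinarith
        have : (-1 : ℤ) < k := by exact_mod_cast hlo
        have : k < 1 := by exact_mod_cast hhi
        omega
      rw [hk0] at hk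
      push_cast at hk
      constructor <;> nlinarith
  · rintro ⟨hs1, hsπ⟩
    exact Or.inr ⟨θ + sAng a θ x, by linarith, by linarith, arc_of_s a θ x h⟩

lemma mem_L1_iff (a : ℝ × ℝ) (θ : ℝ) (x : ℝ × ℝ)
    (h : (x.1 - a.1) ^ 2 + (x.2 - a.2) ^ 2 = 1) :
    x ∈ L1 a θ ↔ (0 < sAng a θ x ∧ sAng a θ x ≤ π) := by
  have hnd : x ∉ diskD a := by simp only [diskD, Set.mem_setOf_eq]; linarith
  have hπ := Real.pi_pos
  have hs0 := sAng_nonneg a θ x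
  have hs2 := sAng_lt a θ x
  constructor
  · rintro (hd | ⟨φ, h1, h2, hxe⟩)
    · exact absurd hd hnd
    · obtain ⟨k, hk⟩ := exists_k a θ x φ hxe
      have hk0 : k = 0 := by
        have hlo : (-1 : ℝ) < k := by nlinarith
        have hhi : (k : ℝ) < 1 := by nlinarith
        have : (-1 : ℤ) < k := by exact_mod_cast hlo
        have : k < 1 := by exact_mod_cast hhi
        omega
      rw [hk0] at hk
      push_cast at hk
      constructor <;> nlinarith
  · rintro ⟨hs1, hsπ⟩
    exact Or.inr ⟨θ + sAng a θ x, by linarith, by linarith, arc_of_s a θ x h⟩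

lemma mem_L2_iff (a : ℝ × ℝ) (θ : ℝ) (x : ℝ × ℝ)
    (h : (x.1 - a.1) ^ 2 + (x.2 - a.2) ^ 2 = 1) :
    x ∈ L2 a θ ↔ sAng a θ x < π := by
  have hnd : x ∉ diskD a := by simp only [diskD, Set.mem_setOf_eq]; linarith
  have hπ := Real.pi_pos
  have hs0 := sAng_nonneg a θ x
  have hs2 := sAng_lt a θ x
  constructor
  · rintro (hd | ⟨φ, h1, h2, hxe⟩)
    · exact absurd hd hnd
    · obtain ⟨k, hk⟩ := exists_k a θ x φ hxe
      have hk0 : k = 0 := by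
        have hlo : (-1 : ℝ) < k := by nlinarith
        have hhi : (k : ℝ) < 1 := by nlinarith
        have : (-1 : ℤ) < k := by exact_mod_cast hlo
        have : k < 1 := by exact_mod_cast hhi
        omega
      rw [hk0] at hk
      push_cast at hk
      nlinarith
  · intro hsπ
    exact Or.inr ⟨θ + sAng a θ x, by linarith, by linarith, arc_of_s a θ x h⟩

lemma exists_rat_center (B : Set (ℝ × ℝ)) (F : Finset (ℝ × ℝ)) (c : ℝ × ℝ)
    (h : ∀ x ∈ F, (x ∈ B → (x.1 - c.1) ^ 2 + (x.2 - c.2) ^ 2 < 1) ∧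
      (x ∉ B → 1 < (x.1 - c.1) ^ 2 + (x.2 - c.2) ^ 2)) :
    ∃ p : ℚ × ℚ, ∀ x ∈ F, (x ∈ diskD ((p.1 : ℝ), (p.2 : ℝ)) ↔ x ∈ B) := by
  classical
  set U : Set (ℝ × ℝ) := ⋂ x ∈ F,
    (if x ∈ B then {p : ℝ × ℝ | (x.1 - p.1) ^ 2 + (x.2 - p.2) ^ 2 < 1}
     else {p : ℝ × ℝ | 1 < (x.1 - p.1) ^ 2 + (x.2 - p.2) ^ 2}) with hUdef
  have hUopen : IsOpen U := by
    refine isOpen_biInter_finset fun x _ => ?_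
    split_ifs
    · exact isOpen_lt (by fun_prop) continuous_const
    · exact isOpen_lt continuous_const (by fun_prop)
  have hcU : c ∈ U := by
    simp only [hUdef, Set.mem_iInter]
    intro x hx
    split_ifs with hxB
    · exact (h x hx).1 hxB
    · exact (h x hx).2 hxB
  have hdense : DenseRange (fun q : ℚ × ℚ => (((q.1 : ℝ), (q.2 : ℝ)) : ℝ × ℝ)) :=
    DenseRange.prodMap Rat.denseRange_cast Rat.denseRange_cast
  obtain ⟨p, hp⟩ := hdense.exists_mem_open hUopen ⟨c, hcU⟩
  refine ⟨p, fun x hx => ?_⟩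
  simp only [hUdef, Set.mem_iInter] at hp
  have := hp x hx
  by_cases hxB : x ∈ B
  · simp only [if_pos hxB] at this
    exact ⟨fun _ => hxB, fun _ => this⟩
  · simp only [if_neg hxB] at this
    simp only [Set.mem_setOf_eq] at this
    exact ⟨fun hmem => absurd hmem (by simp [diskD]; linarith), fun hmem => absurd hmem hxB⟩

lemma mem_KA_of_finset (B : Set (ℝ × ℝ))
    (h : ∀ F : Finset (ℝ × ℝ), ∃ p : ℚ × ℚ,
      ∀ x ∈ F, (x ∈ diskD ((p.1 : ℝ), (p.2 : ℝ)) ↔ x ∈ B)) :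
    chi B ∈ KA := by
  rw [KA, mem_closure_iff_nhds]
  intro U hU
  rw [nhds_pi, Filter.mem_pi] at hU
  obtain ⟨I, hIfin, t, ht, hsub⟩ := hU
  obtain ⟨F, hF⟩ := hIfin.exists_finset_coe
  obtain ⟨p, hp⟩ := h F
  refine ⟨chi (diskD ((p.1 : ℝ), (p.2 : ℝ))), ?_, ⟨p, rfl⟩⟩
  apply hsub
  intro x hxI
  have hx : x ∈ F := by rw [← hF] at hxI; exact_mod_cast hxI
  have heq : chi (diskD ((p.1 : ℝ), (p.2 : ℝ))) x = chi B x := by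
    simp only [chi, Set.boolIndicator]
    by_cases hmem : x ∈ B
    · rw [if_pos ((hp x hx).2 hmem), if_pos hmem]
    · rw [if_neg (fun hc => hmem ((hp x hx).1 hc)), if_neg hmem]
  rw [heq]
  have := ht x
  rw [nhds_discrete, Filter.mem_pure] at this
  exact this

lemma exists_good_center (B : Set (ℝ × ℝ)) (a : ℝ × ℝ) (α : ℝ) (F : Finset (ℝ × ℝ))
    (h : ∀ x ∈ F,
      (x ∈ B ∧ (x.1 - a.1) ^ 2 + (x.2 - a.2) ^ 2 < 1) ∨
      (x ∉ B ∧ 1 < (x.1 - a.1) ^ 2 + (x.2 - a.2) ^ 2) ∨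
      ((x.1 - a.1) ^ 2 + (x.2 - a.2) ^ 2 = 1 ∧
        ((x ∈ B ∧ 0 < (x.2 - a.2) * Real.cos α - (x.1 - a.1) * Real.sin α) ∨
         (x ∉ B ∧ (x.2 - a.2) * Real.cos α - (x.1 - a.1) * Real.sin α ≤ 0)))) :
    ∃ c : ℝ × ℝ, ∀ x ∈ F,
      (x ∈ B → (x.1 - c.1) ^ 2 + (x.2 - c.2) ^ 2 < 1) ∧
      (x ∉ B → 1 < (x.1 - c.1) ^ 2 + (x.2 - c.2) ^ 2) := by
  have key : ∀ᶠ ε in nhdsWithin (0:ℝ) (Set.Ioi 0), ∀ x ∈ F,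
      (x ∈ B → (x.1 - (a.1 - ε * Real.sin α)) ^ 2 + (x.2 - (a.2 + ε * Real.cos α)) ^ 2 < 1) ∧
      (x ∉ B → 1 < (x.1 - (a.1 - ε * Real.sin α)) ^ 2 + (x.2 - (a.2 + ε * Real.cos α)) ^ 2) := by
    rw [Filter.eventually_all_finset]
    intro x hx
    have pyth : Real.sin α ^ 2 + Real.cos α ^ 2 = 1 := Real.sin_sq_add_cos_sq α
    have identity : ∀ ε : ℝ,
        (x.1 - (a.1 - ε * Real.sin α)) ^ 2 + (x.2 - (a.2 + ε * Real.cos α)) ^ 2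
        = (x.1 - a.1) ^ 2 + (x.2 - a.2) ^ 2
          - 2 * ε * ((x.2 - a.2) * Real.cos α - (x.1 - a.1) * Real.sin α) + ε ^ 2 := by
      intro ε; nlinarith [pyth]
    rcases h x hx with ⟨hxB, hlt⟩ | ⟨hxB, hgt⟩ | ⟨heq, hsgn⟩
    · have hcont : Continuous fun ε : ℝ =>
          (x.1 - (a.1 - ε * Real.sin α)) ^ 2 + (x.2 - (a.2 + ε * Real.cos α)) ^ 2 := by
        fun_prop
      have h0 : ((x.1 - (a.1 - (0:ℝ) * Real.sin α)) ^ 2 + (x.2 - (a.2 + (0:ℝ) * Real.cos α)) ^ 2) < 1 := by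
        simpa using hlt
      have := (hcont.tendsto 0).eventually_lt_const h0
      exact (this.filter_mono nhdsWithin_le_nhds).mono fun ε hε =>
        ⟨fun _ => hε, fun hc => absurd hxB hc⟩
    · have hcont : Continuous fun ε : ℝ =>
          (x.1 - (a.1 - ε * Real.sin α)) ^ 2 + (x.2 - (a.2 + ε * Real.cos α)) ^ 2 := by
        fun_prop
      have h0 : (1:ℝ) < (x.1 - (a.1 - (0:ℝ) * Real.sin α)) ^ 2 + (x.2 - (a.2 + (0:ℝ) * Real.cos α)) ^ 2 := by
        simpa using hgt
      have := (hcont.tendsto 0).eventually_const_lt h0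
      exact (this.filter_mono nhdsWithin_le_nhds).mono fun ε hε =>
        ⟨fun hc => absurd hc hxB, fun _ => hε⟩
    · set d := (x.2 - a.2) * Real.cos α - (x.1 - a.1) * Real.sin α with hd
      rcases hsgn with ⟨hxB, hdpos⟩ | ⟨hxB, hdneg⟩
      · have hmem : Set.Ioo (0:ℝ) (2 * d) ∈ nhdsWithin (0:ℝ) (Set.Ioi 0) :=
          Ioo_mem_nhdsGT_of_mem ⟨le_refl 0, by linarith⟩
        refine Filter.eventually_of_mem hmem fun ε hε => ⟨fun _ => ?_, fun hc => absurd hxB hc⟩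
        rw [identity, heq]
        nlinarith [hε.1, hε.2]
      · refine Filter.eventually_of_mem self_mem_nhdsWithin fun ε hε =>
          ⟨fun hc => absurd hc hxB, fun _ => ?_⟩
        rw [identity, heq]
        have hε' : (0:ℝ) < ε := hε
        nlinarith
  obtain ⟨ε, hε⟩ := key.exists
  exact ⟨(a.1 - ε * Real.sin α, a.2 + ε * Real.cos α), hε⟩

lemma d_eq (a : ℝ × ℝ) (θ : ℝ) (x : ℝ × ℝ) (α : ℝ)
    (h : (x.1 - a.1) ^ 2 + (x.2 - a.2) ^ 2 = 1) :
    (x.2 - a.2) * Real.cos α - (x.1 - a.1) * Real.sin α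
      = Real.sin (θ + sAng a θ x - α) := by
  obtain ⟨hc, hs⟩ := cos_sin_sAng a θ x h
  rw [Real.sin_sub, hc, hs]

lemma not_mem_of_far {a x : ℝ × ℝ} {θ : ℝ} (h : 1 < (x.1 - a.1) ^ 2 + (x.2 - a.2) ^ 2) :
    x ∉ L0 a θ ∧ x ∉ L1 a θ ∧ x ∉ L2 a θ := by
  have hnd : x ∉ diskD a := by simp only [diskD, Set.mem_setOf_eq]; linarith
  have harc : ∀ φ : ℝ, x ≠ (a.1 + Real.cos φ, a.2 + Real.sin φ) := by
    intro φ hxe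
    have := circle_of_arc hxe
    linarith
  refine ⟨?_, ?_, ?_⟩ <;> rintro (hd | ⟨φ, _, _, hxe⟩) <;>
    first | exact hnd hd | exact harc φ hxe

lemma sin_nonpos_of_pi_le {s : ℝ} (h1 : π ≤ s) (h2 : s ≤ 2 * π) : Real.sin s ≤ 0 := by
  have := Real.sin_nonneg_of_nonneg_of_le_pi (x := s - π) (by linarith) (by linarith)
  rw [Real.sin_sub_pi] at this
  linarith

lemma chi_L0_mem (a : ℝ × ℝ) (θ : ℝ) : chi (L0 a θ) ∈ KA := by
  apply mem_KA_of_finset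
  intro F
  have hside : ∀ x ∈ F,
      (x ∈ L0 a θ ∧ (x.1 - a.1) ^ 2 + (x.2 - a.2) ^ 2 < 1) ∨
      (x ∉ L0 a θ ∧ 1 < (x.1 - a.1) ^ 2 + (x.2 - a.2) ^ 2) ∨
      ((x.1 - a.1) ^ 2 + (x.2 - a.2) ^ 2 = 1 ∧
        ((x ∈ L0 a θ ∧ 0 < (x.2 - a.2) * Real.cos θ - (x.1 - a.1) * Real.sin θ) ∨
         (x ∉ L0 a θ ∧ (x.2 - a.2) * Real.cos θ - (x.1 - a.1) * Real.sin θ ≤ 0))) := by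
    intro x _
    rcases lt_trichotomy ((x.1 - a.1) ^ 2 + (x.2 - a.2) ^ 2) 1 with hlt | heq | hgt
    · exact Or.inl ⟨Or.inl hlt, hlt⟩
    · right; right
      refine ⟨heq, ?_⟩
      rw [d_eq a θ x θ heq, show θ + sAng a θ x - θ = sAng a θ x by ring]
      have hs0 := sAng_nonneg a θ x
      have hs2 := sAng_lt a θ x
      by_cases hB : x ∈ L0 a θ
      · obtain ⟨h1, h2⟩ := (mem_L0_iff a θ x heq).1 hB
        exact Or.inl ⟨hB, Real.sin_pos_of_pos_of_lt_pi h1 h2⟩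
      · refine Or.inr ⟨hB, ?_⟩
        rw [mem_L0_iff a θ x heq] at hB
        push_neg at hB
        rcases le_or_gt (sAng a θ x) 0 with hle | hpos
        · rw [le_antisymm hle hs0, Real.sin_zero]
        · exact sin_nonpos_of_pi_le (hB hpos) (le_of_lt hs2)
    · obtain ⟨hn, _, _⟩ := not_mem_of_far (θ := θ) hgt
      exact Or.inr (Or.inl ⟨hn, hgt⟩)
  obtain ⟨c, hc⟩ := exists_good_center (L0 a θ) a θ F hside
  exact exists_rat_center _ F c hc

lemma chi_L1_mem (a : ℝ × ℝ) (θ : ℝ) : chi (L1 a θ) ∈ KA := by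
  apply mem_KA_of_finset
  intro F
  have hπ := Real.pi_pos
  -- choose δ
  have hbase : ∀ᶠ δ in nhdsWithin (0:ℝ) (Set.Ioi 0), 0 < δ ∧ δ < π :=
    Filter.eventually_of_mem (Ioo_mem_nhdsGT_of_mem ⟨le_refl 0, hπ⟩) fun δ hδ => ⟨hδ.1, hδ.2⟩
  have hP : ∀ᶠ δ in nhdsWithin (0:ℝ) (Set.Ioi 0), ∀ x ∈ F,
      ((x.1 - a.1) ^ 2 + (x.2 - a.2) ^ 2 = 1 →
        (x ∈ L1 a θ → δ < sAng a θ x) ∧ (π < sAng a θ x → δ < sAng a θ x - π)) := by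
    rw [Filter.eventually_all_finset]
    intro x _
    by_cases hg : (x.1 - a.1) ^ 2 + (x.2 - a.2) ^ 2 = 1
    · have e1 : ∀ᶠ δ in nhdsWithin (0:ℝ) (Set.Ioi 0), (x ∈ L1 a θ → δ < sAng a θ x) := by
        by_cases hB : x ∈ L1 a θ
        · have h0s : 0 < sAng a θ x := ((mem_L1_iff a θ x hg).1 hB).1
          exact Filter.eventually_of_mem (nhdsWithin_le_nhds (Iio_mem_nhds h0s))
            fun δ hδ _ => hδ
        · exact Filter.Eventually.of_forall fun δ h => absurd h hB
      have e2 : ∀ᶠ δ in nhdsWithin (0:ℝ) (Set.Ioi 0),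
          (π < sAng a θ x → δ < sAng a θ x - π) := by
        by_cases hπs : π < sAng a θ x
        · have hpos : (0:ℝ) < sAng a θ x - π := by linarith
          exact Filter.eventually_of_mem (nhdsWithin_le_nhds (Iio_mem_nhds hpos))
            fun δ hδ _ => hδ
        · exact Filter.Eventually.of_forall fun δ h => absurd h hπs
      exact (e1.and e2).mono fun δ h _ => h
    · exact Filter.Eventually.of_forall fun δ h => absurd h hg
  obtain ⟨δ, ⟨hδ0, hδπ⟩, hPall⟩ := (hbase.and hP).exists
  have hside : ∀ x ∈ F,
      (x ∈ L1 a θ ∧ (x.1 - a.1) ^ 2 + (x.2 - a.2) ^ 2 < 1) ∨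
      (x ∉ L1 a θ ∧ 1 < (x.1 - a.1) ^ 2 + (x.2 - a.2) ^ 2) ∨
      ((x.1 - a.1) ^ 2 + (x.2 - a.2) ^ 2 = 1 ∧
        ((x ∈ L1 a θ ∧ 0 < (x.2 - a.2) * Real.cos (θ + δ) - (x.1 - a.1) * Real.sin (θ + δ)) ∨
         (x ∉ L1 a θ ∧ (x.2 - a.2) * Real.cos (θ + δ) - (x.1 - a.1) * Real.sin (θ + δ) ≤ 0))) := by
    intro x hx
    rcases lt_trichotomy ((x.1 - a.1) ^ 2 + (x.2 - a.2) ^ 2) 1 with hlt | heq | hgt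
    · exact Or.inl ⟨Or.inl hlt, hlt⟩
    · right; right
      refine ⟨heq, ?_⟩
      rw [d_eq a θ x (θ + δ) heq, show θ + sAng a θ x - (θ + δ) = sAng a θ x - δ by ring]
      have hs0 := sAng_nonneg a θ x
      have hs2 := sAng_lt a θ x
      obtain ⟨hQ1, hQ2⟩ := hPall x hx heq
      by_cases hB : x ∈ L1 a θ
      · obtain ⟨h1, h2⟩ := (mem_L1_iff a θ x heq).1 hB
        exact Or.inl ⟨hB, Real.sin_pos_of_pos_of_lt_pi (by linarith [hQ1 hB]) (by linarith)⟩
      · refine Or.inr ⟨hB, ?_⟩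
        rw [mem_L1_iff a θ x heq] at hB
        push_neg at hB
        rcases le_or_gt (sAng a θ x) 0 with hle | hpos
        · have : sAng a θ x = 0 := le_antisymm hle hs0
          rw [this, zero_sub, Real.sin_neg]
          have : 0 < Real.sin δ := Real.sin_pos_of_pos_of_lt_pi hδ0 hδπ
          linarith
        · have hps : π < sAng a θ x := hB hpos
          exact sin_nonpos_of_pi_le (by linarith [hQ2 hps]) (by linarith)
    · obtain ⟨_, hn, _⟩ := not_mem_of_far (θ := θ) hgt
      exact Or.inr (Or.inl ⟨hn, hgt⟩)
  obtain ⟨c, hc⟩ := exists_good_center (L1 a θ) a (θ + δ) F hside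
  exact exists_rat_center _ F c hc

lemma chi_L2_mem (a : ℝ × ℝ) (θ : ℝ) : chi (L2 a θ) ∈ KA := by
  apply mem_KA_of_finset
  intro F
  have hπ := Real.pi_pos
  have hbase : ∀ᶠ δ in nhdsWithin (0:ℝ) (Set.Ioi 0), 0 < δ ∧ δ < π :=
    Filter.eventually_of_mem (Ioo_mem_nhdsGT_of_mem ⟨le_refl 0, hπ⟩) fun δ hδ => ⟨hδ.1, hδ.2⟩
  have hP : ∀ᶠ δ in nhdsWithin (0:ℝ) (Set.Ioi 0), ∀ x ∈ F,
      ((x.1 - a.1) ^ 2 + (x.2 - a.2) ^ 2 = 1 →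
        (x ∈ L2 a θ → δ < π - sAng a θ x) ∧ δ < 2 * π - sAng a θ x) := by
    rw [Filter.eventually_all_finset]
    intro x _
    by_cases hg : (x.1 - a.1) ^ 2 + (x.2 - a.2) ^ 2 = 1
    · have e1 : ∀ᶠ δ in nhdsWithin (0:ℝ) (Set.Ioi 0), (x ∈ L2 a θ → δ < π - sAng a θ x) := by
        by_cases hB : x ∈ L2 a θ
        · have h0s : 0 < π - sAng a θ x := by
            have := (mem_L2_iff a θ x hg).1 hB; linarith
          exact Filter.eventually_of_mem (nhdsWithin_le_nhds (Iio_mem_nhds h0s))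
            fun δ hδ _ => hδ
        · exact Filter.Eventually.of_forall fun δ h => absurd h hB
      have e2 : ∀ᶠ δ in nhdsWithin (0:ℝ) (Set.Ioi 0), δ < 2 * π - sAng a θ x := by
        have hpos : (0:ℝ) < 2 * π - sAng a θ x := by linarith [sAng_lt a θ x]
        exact Filter.eventually_of_mem (nhdsWithin_le_nhds (Iio_mem_nhds hpos)) fun δ hδ => hδ
      exact (e1.and e2).mono fun δ h _ => h
    · exact Filter.Eventually.of_forall fun δ h => absurd h hg
  obtain ⟨δ, ⟨hδ0, hδπ⟩, hPall⟩ := (hbase.and hP).exists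
  have hside : ∀ x ∈ F,
      (x ∈ L2 a θ ∧ (x.1 - a.1) ^ 2 + (x.2 - a.2) ^ 2 < 1) ∨
      (x ∉ L2 a θ ∧ 1 < (x.1 - a.1) ^ 2 + (x.2 - a.2) ^ 2) ∨
      ((x.1 - a.1) ^ 2 + (x.2 - a.2) ^ 2 = 1 ∧
        ((x ∈ L2 a θ ∧ 0 < (x.2 - a.2) * Real.cos (θ - δ) - (x.1 - a.1) * Real.sin (θ - δ)) ∨
         (x ∉ L2 a θ ∧ (x.2 - a.2) * Real.cos (θ - δ) - (x.1 - a.1) * Real.sin (θ - δ) ≤ 0))) := by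
    intro x hx
    rcases lt_trichotomy ((x.1 - a.1) ^ 2 + (x.2 - a.2) ^ 2) 1 with hlt | heq | hgt
    · exact Or.inl ⟨Or.inl hlt, hlt⟩
    · right; right
      refine ⟨heq, ?_⟩
      rw [d_eq a θ x (θ - δ) heq, show θ + sAng a θ x - (θ - δ) = sAng a θ x + δ by ring]
      have hs0 := sAng_nonneg a θ x
      have hs2 := sAng_lt a θ x
      obtain ⟨hQ1, hQ2⟩ := hPall x hx heq
      by_cases hB : x ∈ L2 a θ
      · exact Or.inl ⟨hB, Real.sin_pos_of_pos_of_lt_pi (by linarith)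
          (by linarith [hQ1 hB])⟩
      · refine Or.inr ⟨hB, ?_⟩
        rw [mem_L2_iff a θ x heq] at hB
        push_neg at hB
        exact sin_nonpos_of_pi_le (by linarith) (by linarith)
    · obtain ⟨_, _, hn⟩ := not_mem_of_far (θ := θ) hgt
      exact Or.inr (Or.inl ⟨hn, hgt⟩)
  obtain ⟨c, hc⟩ := exists_good_center (L2 a θ) a (θ - δ) F hside
  exact exists_rat_center _ F c hc

lemma chi_empty_mem : chi (∅ : Set (ℝ × ℝ)) ∈ KA := by
  apply mem_KA_of_finset
  intro F
  obtain ⟨M, hM⟩ := (F.image Prod.fst).exists_le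
  obtain ⟨q, hq⟩ := exists_rat_gt (M + 2)
  refine ⟨(q, 0), fun x hx => ?_⟩
  have hx1 : x.1 ≤ M := hM _ (Finset.mem_image_of_mem _ hx)
  constructor
  · intro hmem
    exfalso
    simp only [diskD, Set.mem_setOf_eq] at hmem
    have : (2:ℝ) < q - x.1 := by linarith
    nlinarith
  · intro hmem
    exact absurd hmem (Set.notMem_empty x)

/-- `Y ∪ {χ_B : B ∈ ℬ} ∪ {χ_∅} ⊆ KA`. -/
theorem subset_KA :
    YA ∪ {f | ∃ B ∈ BB, f = chi B} ∪ {chi (∅ : Set (ℝ × ℝ))} ⊆ KA := by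
  intro f hf
  rcases hf with (hf | hf) | hf
  · exact subset_closure hf
  · obtain ⟨B, ⟨a, θ, hB⟩, rfl⟩ := hf
    rcases hB with rfl | rfl | rfl
    · exact chi_L0_mem a θ
    · exact chi_L1_mem a θ
    · exact chi_L2_mem a θ
  · rw [Set.mem_singleton_iff] at hf
    rw [hf]
    exact chi_empty_mem
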